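/- Joint importance sketch matrix multiplication (expectation bound): Let X ∈ ℂ^{m×n}, Y ∈ ℂ^{m×n'}, ε ∈ (0,1), φ, φ' ≥ 1, and let Σ be an (r, ε, φ, φ')-approximate joint importance sketch of X and Y, i.e., built from r i.i.d. samples from p̃ with ‖p̃ − p‖_TV ≤ ε and p(i) ≥ (1/2)((1/φ)p_{row(X)}(i) + (1/φ')p_{row(Y)}(i)). Then ‖E[X† Σ† Σ Y] − X† Y‖_F ≤ 2ε·√(φφ')·‖X‖_F·‖Y‖_F. -/

import Mathlib

open Finset Matrix

attribute [local instance] Matrix.frobeniusNormedAddCommGroup Matrix.frobeniusNormedSpace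

/-- Euclidean norm of row `i` of a matrix. -/
noncomputable def rowNorm {m n : ℕ} (A : Matrix (Fin m) (Fin n) ℂ) (i : Fin m) : ℝ :=
  Real.sqrt (∑ j, ‖A i j‖ ^ 2)

/-- Frobenius norm of a matrix. -/
noncomputable def frobNorm {m n : ℕ} (A : Matrix (Fin m) (Fin n) ℂ) : ℝ :=
  Real.sqrt (∑ i, ∑ j, ‖A i j‖ ^ 2)

/-- The sketch matrix determined by sampled indices `s` and importance distribution `p`:
row `i` equals `e_{s i}/√(r·p(s i))` when `p (s i) > 0` and is zero otherwise. -/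
noncomputable def sketchMatrix {m : ℕ} (r : ℕ) (p : Fin m → ℝ) (s : Fin r → Fin m) :
    Matrix (Fin r) (Fin m) ℂ :=
  Matrix.of fun i j =>
    if j = s i ∧ 0 < p (s i) then ((1 / Real.sqrt (r * p (s i)) : ℝ) : ℂ) else 0

lemma frobNorm_eq_norm {m n : ℕ} (A : Matrix (Fin m) (Fin n) ℂ) : frobNorm A = ‖A‖ := by
  rw [frobNorm, Matrix.frobenius_norm_def, Real.sqrt_eq_rpow]
  norm_num

lemma frobNorm_nonneg {m n : ℕ} (A : Matrix (Fin m) (Fin n) ℂ) : 0 ≤ frobNorm A :=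
  Real.sqrt_nonneg _

lemma rowNorm_nonneg {m n : ℕ} (A : Matrix (Fin m) (Fin n) ℂ) (i : Fin m) : 0 ≤ rowNorm A i :=
  Real.sqrt_nonneg _

lemma frobNorm_pos {m n : ℕ} {A : Matrix (Fin m) (Fin n) ℂ} (hA : A ≠ 0) : 0 < frobNorm A := by
  rw [frobNorm_eq_norm]
  exact norm_pos_iff.mpr hA

lemma marg {r m : ℕ} (w : Fin m → ℂ) (hw : ∑ j, w j = 1) (k : Fin r) (f : Fin m → ℂ) :
    ∑ s : Fin r → Fin m, (∏ i, w (s i)) * f (s k) = ∑ j, w j * f j := by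
  have h1 : ∀ s : Fin r → Fin m,
      (∏ i, w (s i)) * f (s k) = ∏ i, (w (s i) * if i = k then f (s i) else 1) := by
    intro s
    rw [Finset.prod_mul_distrib]
    simp
  simp_rw [h1]
  rw [← Fintype.prod_sum (fun (i : Fin r) (j : Fin m) => w j * if i = k then f j else 1)]
  have h2 : ∀ i : Fin r, (∑ j, (w j * if i = k then f j else 1)) =
      if i = k then ∑ j, w j * f j else 1 := by
    intro i
    split_ifs with h <;> simp [hw]
  simp_rw [h2]
  simp

lemma entry_eq {m n n' r : ℕ} (p : Fin m → ℝ)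
    (X : Matrix (Fin m) (Fin n) ℂ) (Y : Matrix (Fin m) (Fin n') ℂ) (s : Fin r → Fin m)
    (a : Fin n) (b : Fin n') :
    (Xᴴ * (sketchMatrix r p s)ᴴ * (sketchMatrix r p s * Y)) a b
      = ∑ k : Fin r, (if 0 < p (s k) then ((((r : ℝ) * p (s k))⁻¹ : ℝ) : ℂ) else 0) *
          (starRingEnd ℂ (X (s k) a) * Y (s k) b) := by
  have hL : ∀ k : Fin r, (Xᴴ * (sketchMatrix r p s)ᴴ) a k
      = (if 0 < p (s k) then ((1 / Real.sqrt (r * p (s k)) : ℝ) : ℂ) else 0) *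
          starRingEnd ℂ (X (s k) a) := by
    intro k
    simp only [Matrix.mul_apply, Matrix.conjTranspose_apply, sketchMatrix, Matrix.of_apply,
      ite_and, apply_ite (star : ℂ → ℂ), star_zero, RCLike.star_def, Complex.conj_ofReal,
      mul_ite, mul_zero]
    rw [Finset.sum_ite_eq' Finset.univ (s k)]
    simp [mul_comm]
  have hR : ∀ k : Fin r, (sketchMatrix r p s * Y) k b
      = (if 0 < p (s k) then ((1 / Real.sqrt (r * p (s k)) : ℝ) : ℂ) else 0) * Y (s k) b := by
    intro k
    simp only [Matrix.mul_apply, sketchMatrix, Matrix.of_apply, ite_and, ite_mul, zero_mul]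
    rw [Finset.sum_ite_eq' Finset.univ (s k)]
    simp
  rw [Matrix.mul_apply]
  refine Finset.sum_congr rfl fun k _ => ?_
  rw [hL, hR]
  by_cases h : 0 < p (s k)
  · by_cases hr0 : r = 0
    · exact absurd k.2 (by simp [hr0])
    have hpos : 0 < (r : ℝ) * p (s k) := by
      have : 0 < (r : ℝ) := by positivity
      positivity
    simp only [h, if_true]
    rw [show ((1 / Real.sqrt (↑r * p (s k)) : ℝ) : ℂ) * starRingEnd ℂ (X (s k) a) *
        (((1 / Real.sqrt (↑r * p (s k)) : ℝ) : ℂ) * Y (s k) b)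
      = (((1 / Real.sqrt (↑r * p (s k)) * (1 / Real.sqrt (↑r * p (s k))) : ℝ)) : ℂ) *
        (starRingEnd ℂ (X (s k) a) * Y (s k) b) by push_cast; ring]
    congr 2
    rw [div_mul_div_comm, one_mul, Real.mul_self_sqrt hpos.le]
    norm_num
  · simp [h]

lemma frobNorm_outer {m n n' : ℕ} (X : Matrix (Fin m) (Fin n) ℂ)
    (Y : Matrix (Fin m) (Fin n') ℂ) (j : Fin m) :
    frobNorm (Matrix.of fun a b => starRingEnd ℂ (X j a) * Y j b)
      = rowNorm X j * rowNorm Y j := by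
  rw [frobNorm, rowNorm, rowNorm,
    ← Real.sqrt_mul (Finset.sum_nonneg fun _ _ => by positivity)]
  congr 1
  rw [Finset.sum_mul_sum]
  refine Finset.sum_congr rfl fun a _ => Finset.sum_congr rfl fun b _ => ?_
  simp [norm_mul, mul_pow]

lemma sqrt_am_gm (u v : ℝ) (hu : 0 ≤ u) (hv : 0 ≤ v) : Real.sqrt (u * v) ≤ (u + v) / 2 := by
  have h : u * v ≤ ((u + v) / 2) ^ 2 := by nlinarith [sq_nonneg (u - v)]
  calc Real.sqrt (u * v) ≤ Real.sqrt (((u + v) / 2) ^ 2) := Real.sqrt_le_sqrt h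
    _ = (u + v) / 2 := Real.sqrt_sq (by positivity)

/-- **Joint importance sketch matrix multiplication: expectation bound.**
Let `Σ` be an `(r,ε,φ,φ')`-approximate joint importance sketch of `X` and `Y`, i.e., built
from `r` i.i.d. samples from `p̃` with `‖p̃−p‖_TV ≤ ε` and
`p(i) ≥ (1/2)((1/φ)p_{row(X)}(i) + (1/φ')p_{row(Y)}(i))`.  Then
`‖E[X† Σ† Σ Y] − X† Y‖_F ≤ 2ε·√(φφ')·‖X‖_F·‖Y‖_F`. -/
theorem joint_sketch_matrix_mult_expectation
    (m n n' r : ℕ) (hr : 1 ≤ r)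
    (X : Matrix (Fin m) (Fin n) ℂ) (Y : Matrix (Fin m) (Fin n') ℂ)
    (hX : X ≠ 0) (hY : Y ≠ 0)
    (ε : ℝ) (hε : ε ∈ Set.Ioo (0:ℝ) 1) (φ φ' : ℝ) (hφ : 1 ≤ φ) (hφ' : 1 ≤ φ')
    (p ptilde : Fin m → ℝ)
    (hp_nonneg : ∀ i, 0 ≤ p i) (hp_sum : ∑ i, p i = 1)
    (hpt_nonneg : ∀ i, 0 ≤ ptilde i) (hpt_sum : ∑ i, ptilde i = 1)
    (hp_over : ∀ i, (1/2) * ((1/φ) * (rowNorm X i ^ 2 / frobNorm X ^ 2)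
            + (1/φ') * (rowNorm Y i ^ 2 / frobNorm Y ^ 2)) ≤ p i)
    (hTV : (1/2) * ∑ i, |ptilde i - p i| ≤ ε) :
    frobNorm
      ((∑ s : Fin r → Fin m, ((∏ i, ptilde (s i) : ℝ) : ℂ) •
          (Xᴴ * (sketchMatrix r p s)ᴴ * (sketchMatrix r p s * Y)))
        - Xᴴ * Y)
      ≤ 2 * ε * Real.sqrt (φ * φ') * frobNorm X * frobNorm Y := by
  obtain ⟨hε0, hε1⟩ := hε
  have hA : 0 < frobNorm X := frobNorm_pos hX
  have hB : 0 < frobNorm Y := frobNorm_pos hY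
  have hφ0 : 0 < φ := lt_of_lt_of_le one_pos hφ
  have hφ'0 : 0 < φ' := lt_of_lt_of_le one_pos hφ'
  set c : Fin m → ℝ := fun j => (if 0 < p j then ptilde j / p j else 0) - 1 with hc
  set M : Fin m → Matrix (Fin n) (Fin n') ℂ :=
    fun j => Matrix.of fun a b => starRingEnd ℂ (X j a) * Y j b with hM
  -- Step 1: the matrix under the norm equals ∑ j, c j • M j
  have hD : ((∑ s : Fin r → Fin m, ((∏ i, ptilde (s i) : ℝ) : ℂ) •
          (Xᴴ * (sketchMatrix r p s)ᴴ * (sketchMatrix r p s * Y)))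
        - Xᴴ * Y) = ∑ j, c j • M j := by
    ext a b
    have hE : (∑ s : Fin r → Fin m, ((∏ i, ptilde (s i) : ℝ) : ℂ) •
          (Xᴴ * (sketchMatrix r p s)ᴴ * (sketchMatrix r p s * Y))) a b
        = ∑ j, ((if 0 < p j then ptilde j / p j else 0 : ℝ) : ℂ) *
            (starRingEnd ℂ (X j a) * Y j b) := by
      simp only [Matrix.sum_apply, Matrix.smul_apply, smul_eq_mul]
      have hrw : ∀ s : Fin r → Fin m,
          ((∏ i, ptilde (s i) : ℝ) : ℂ) *
            (Xᴴ * (sketchMatrix r p s)ᴴ * (sketchMatrix r p s * Y)) a b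
          = ∑ k : Fin r, (∏ i, ((ptilde (s i) : ℝ) : ℂ)) *
              ((if 0 < p (s k) then ((((r : ℝ) * p (s k))⁻¹ : ℝ) : ℂ) else 0) *
                (starRingEnd ℂ (X (s k) a) * Y (s k) b)) := by
        intro s
        rw [entry_eq, Finset.mul_sum]
        refine Finset.sum_congr rfl fun k _ => ?_
        push_cast
        ring
      simp_rw [hrw]
      rw [Finset.sum_comm]
      have hw : ∑ j, ((ptilde j : ℝ) : ℂ) = 1 := by
        rw [← Complex.ofReal_sum, hpt_sum, Complex.ofReal_one]
      have hmargk : ∀ k : Fin r,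
          (∑ s : Fin r → Fin m, (∏ i, ((ptilde (s i) : ℝ) : ℂ)) *
            ((if 0 < p (s k) then ((((r : ℝ) * p (s k))⁻¹ : ℝ) : ℂ) else 0) *
              (starRingEnd ℂ (X (s k) a) * Y (s k) b)))
          = ∑ j, ((ptilde j : ℝ) : ℂ) *
              ((if 0 < p j then ((((r : ℝ) * p j)⁻¹ : ℝ) : ℂ) else 0) *
                (starRingEnd ℂ (X j a) * Y j b)) :=
        fun k => marg (fun j => ((ptilde j : ℝ) : ℂ)) hw k
          (fun j => (if 0 < p j then ((((r : ℝ) * p j)⁻¹ : ℝ) : ℂ) else 0) *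
              (starRingEnd ℂ (X j a) * Y j b))
      simp_rw [hmargk]
      rw [Finset.sum_const, Finset.card_univ, Fintype.card_fin, nsmul_eq_mul, Finset.mul_sum]
      refine Finset.sum_congr rfl fun j _ => ?_
      have hr0 : (r : ℂ) ≠ 0 := by
        exact_mod_cast Nat.cast_ne_zero.mpr (Nat.one_le_iff_ne_zero.mp hr)
      split_ifs with h
      · have hpj : (p j : ℝ) ≠ 0 := ne_of_gt h
        have hpj' : ((p j : ℝ) : ℂ) ≠ 0 := Complex.ofReal_ne_zero.mpr hpj
        push_cast
        field_simp
      · simp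
    rw [Matrix.sub_apply, hE, Matrix.mul_apply]
    simp only [Matrix.sum_apply, Matrix.smul_apply, Matrix.conjTranspose_apply, hM, hc,
      Matrix.of_apply, Complex.real_smul, RCLike.star_def]
    rw [← Finset.sum_sub_distrib]
    refine Finset.sum_congr rfl fun j _ => ?_
    split_ifs with h <;> push_cast <;> ring
  have hMnorm : ∀ j, ‖M j‖ = rowNorm X j * rowNorm Y j := fun j => by
    rw [← frobNorm_eq_norm, hM, frobNorm_outer]
  have key : ∀ j, |c j| * ‖M j‖
      ≤ Real.sqrt (φ * φ') * frobNorm X * frobNorm Y * |ptilde j - p j| := by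
    intro j
    rw [hMnorm]
    set a := rowNorm X j with ha
    set bb := rowNorm Y j with hbb
    set A := frobNorm X with hAd
    set B := frobNorm Y with hBd
    have ha0 : 0 ≤ a := rowNorm_nonneg X j
    have hb0 : 0 ≤ bb := rowNorm_nonneg Y j
    by_cases h : 0 < p j
    · have hamgm := sqrt_am_gm ((1/φ) * (a ^ 2 / A ^ 2)) ((1/φ') * (bb ^ 2 / B ^ 2))
        (by positivity) (by positivity)
      have hsq : (1/φ) * (a ^ 2 / A ^ 2) * ((1/φ') * (bb ^ 2 / B ^ 2))
          = (a * bb / (Real.sqrt (φ * φ') * A * B)) ^ 2 := by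
        simp only [div_pow, mul_pow, Real.sq_sqrt (show (0:ℝ) ≤ φ * φ' by positivity)]
        field_simp
        try ring
        try tauto
      rw [hsq, Real.sqrt_sq (by positivity)] at hamgm
      have hab : a * bb ≤ Real.sqrt (φ * φ') * A * B * p j := by
        have h2 := hp_over j
        rw [← ha, ← hbb] at h2
        have : a * bb / (Real.sqrt (φ * φ') * A * B) ≤ p j := by linarith
        calc a * bb = a * bb / (Real.sqrt (φ * φ') * A * B) * (Real.sqrt (φ * φ') * A * B) := by
              field_simp
          _ ≤ p j * (Real.sqrt (φ * φ') * A * B) :=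
              mul_le_mul_of_nonneg_right this (by positivity)
          _ = Real.sqrt (φ * φ') * A * B * p j := by ring
      have hcj : |c j| = |ptilde j - p j| / p j := by
        have hce : c j = (ptilde j - p j) / p j := by
          simp only [hc]
          rw [if_pos h]
          field_simp
        rw [hce, abs_div, abs_of_pos h]
      rw [hcj]
      calc |ptilde j - p j| / p j * (a * bb)
          ≤ |ptilde j - p j| / p j * (Real.sqrt (φ * φ') * A * B * p j) :=
            mul_le_mul_of_nonneg_left hab (by positivity)
        _ = Real.sqrt (φ * φ') * A * B * |ptilde j - p j| := by
            field_simp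
    · have hp0 : p j = 0 := le_antisymm (not_lt.mp h) (hp_nonneg j)
      have h2 := hp_over j
      rw [← ha, ← hbb, hp0] at h2
      have hu : (1/φ) * (a ^ 2 / A ^ 2) = 0 := by
        have h3 : 0 ≤ (1/φ) * (a ^ 2 / A ^ 2) := by positivity
        have h4 : 0 ≤ (1/φ') * (bb ^ 2 / B ^ 2) := by positivity
        linarith
      have haz : a = 0 := by
        have hA2 : A ^ 2 ≠ 0 := by positivity
        have hφn : (1:ℝ)/φ ≠ 0 := by positivity
        have : a ^ 2 / A ^ 2 = 0 := by
          rcases mul_eq_zero.mp hu with h' | h'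
          · exact absurd h' hφn
          · exact h'
        have : a ^ 2 = 0 := by
          rcases div_eq_zero_iff.mp this with h' | h'
          · exact h'
          · exact absurd h' hA2
        exact sq_eq_zero_iff.mp this
      rw [haz]
      have : |c j| * (0 * bb) = 0 := by ring
      rw [this]
      positivity
  rw [hD]
  calc frobNorm (∑ j, c j • M j) = ‖∑ j, c j • M j‖ := frobNorm_eq_norm _
    _ ≤ ∑ j, ‖c j • M j‖ := norm_sum_le _ _
    _ = ∑ j, |c j| * ‖M j‖ := by
        refine Finset.sum_congr rfl fun j _ => ?_
        rw [norm_smul, Real.norm_eq_abs]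
    _ ≤ ∑ j, Real.sqrt (φ * φ') * frobNorm X * frobNorm Y * |ptilde j - p j| :=
        Finset.sum_le_sum fun j _ => key j
    _ = Real.sqrt (φ * φ') * frobNorm X * frobNorm Y * ∑ j, |ptilde j - p j| := by
        rw [← Finset.mul_sum]
    _ ≤ Real.sqrt (φ * φ') * frobNorm X * frobNorm Y * (2 * ε) := by
        refine mul_le_mul_of_nonneg_left (by linarith) (by positivity)
    _ = 2 * ε * Real.sqrt (φ * φ') * frobNorm X * frobNorm Y := by ring
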